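/- Let k be an algebraically closed field, G a finite abelian group with char(k) ∤ |G| acting on a noetherian k-algebra A by algebra automorphisms (with a fixed isomorphism G ≅ G^∨), and μ a normalised 2-cocycle of G with values in kˣ. Then A is strongly noetherian if and only if the cocycle twist A^{G,μ} is strongly noetherian. Here A is strongly noetherian if for every commutative noetherian k-algebra R, the ring A ⊗_k R is noetherian. -/

import Mathlib

universe u v

/-- A normalised 2-cocycle of the group `G` with values in `kˣ`. -/
def IsCocycle {G : Type*} [Group G] {k : Type*} [Field k] (μ : G → G → kˣ) : Prop :=
  (∀ g h l : G, μ g h * μ (g * h) l = μ g (h * l) * μ h l) ∧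
    (∀ g : G, μ 1 g = 1) ∧ (∀ g : G, μ g 1 = 1)

/-- The isotypic component of the `k`-algebra `A`, under the action
`ρ` of `G` by `k`-algebra automorphisms, corresponding to the character `c : G →* kˣ`. -/
def isotypic {k A G : Type*} [Field k] [Ring A] [Algebra k A] [Group G]
    (ρ : G →* (A ≃ₐ[k] A)) (c : G →* kˣ) : Submodule k A where
  carrier := {a | ∀ h : G, ρ h a = (c h : k) • a}
  add_mem' := fun {a} {b} ha hb h => by rw [map_add, ha h, hb h, smul_add]
  zero_mem' := fun h => by rw [map_zero, smul_zero]
  smul_mem' := fun r a ha h => by rw [map_smul, ha h, smul_comm]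

/-- Given an action `ρ` of a finite abelian group `G` on `A` by `k`-algebra automorphisms
and a fixed isomorphism `χ : G ≅ G^∨` of `G` with its character group, the `G`-grading of
`A` induced by the action: `A_g` is the isotypic component of the character `χ_{g⁻¹}`. -/
def actionGrading {k A G : Type*} [Field k] [Ring A] [Algebra k A] [Group G]
    (ρ : G →* (A ≃ₐ[k] A)) (χ : G ≃* (G →* kˣ)) : G → Submodule k A :=
  fun g => isotypic ρ (χ g⁻¹)

/-- `f : A ≃ₗ[k] B` realises the `k`-algebra `B` as the cocycle twist `A^{G,μ}` of `A`,
with respect to the `G`-grading `ℬ` of `A` and the 2-cocycle `μ`: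
`f` is a `k`-linear isomorphism with `f 1 = 1` and
`f a * f b = μ g h • f (a * b)` for all homogeneous `a ∈ A_g`, `b ∈ A_h`. -/
structure IsCocycleTwist (k : Type*) [Field k] {G : Type*} [Group G]
    {A : Type*} [Ring A] [Algebra k A] {B : Type*} [Ring B] [Algebra k B]
    (ℬ : G → Submodule k A) (μ : G → G → kˣ) (f : A ≃ₗ[k] B) : Prop where
  map_one : f 1 = 1
  map_mul : ∀ (g h : G) (a b : A), a ∈ ℬ g → b ∈ ℬ h →
    f a * f b = (μ g h : k) • f (a * b)

open scoped TensorProduct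

/-- A ring is noetherian (on both sides): noetherian as a left module and as a right
module over itself. -/
def IsNoetherianRingBoth (S : Type*) [Ring S] : Prop :=
  IsNoetherianRing S ∧ IsNoetherianRing Sᵐᵒᵖ

/-- A noetherian `k`-algebra `S` is strongly noetherian if `S ⊗_k R` is noetherian for
every commutative noetherian `k`-algebra `R`. -/
def IsStronglyNoetherian (k : Type u) [Field k] (S : Type u) [Ring S] [Algebra k S] : Prop :=
  ∀ (R : Type u) [CommRing R] [Algebra k R], IsNoetherianRing R →
    IsNoetherianRingBoth (S ⊗[k] R)


open Finset

section CharAux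

variable {k : Type*} [Field k] {G : Type*} [CommGroup G] [Fintype G]

lemma char_sum_eq_zero {c : G →* kˣ} (hc : c ≠ 1) : (∑ s : G, ((c s : k))) = 0 := by
  obtain ⟨s₀, hs₀⟩ : ∃ s₀, c s₀ ≠ 1 := by
    by_contra h
    push_neg at h
    exact hc (MonoidHom.ext fun s => h s)
  have key : ((c s₀ : k)) * ∑ s : G, ((c s : k)) = ∑ s : G, ((c s : k)) := by
    rw [Finset.mul_sum]
    rw [← Equiv.sum_comp (Equiv.mulLeft s₀) (fun s => ((c s : k)))]
    apply Finset.sum_congr rfl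
    intro s _
    simp [Equiv.mulLeft, map_mul]
  have h2 : (((c s₀ : k)) - 1) * ∑ s : G, ((c s : k)) = 0 := by
    rw [sub_mul, one_mul, key, sub_self]
  rcases mul_eq_zero.mp h2 with h | h
  · exact absurd (Units.ext (by simpa using sub_eq_zero.mp h)) hs₀
  · exact h

lemma exists_char_val_ne_one (χ : G ≃* (G →* kˣ)) {s : G} (hs : s ≠ 1) :
    ∃ g : G, χ g s ≠ 1 := by
  by_contra h
  push_neg at h
  set H := Subgroup.zpowers s with hH
  have hker : ∀ g : G, H ≤ (χ g).ker := by
    intro g x hx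
    obtain ⟨n, rfl⟩ := Subgroup.mem_zpowers_iff.mp hx
    simp [MonoidHom.mem_ker, map_zpow, h g]
  let κ : G → (G ⧸ H →* kˣ) := fun g => QuotientGroup.lift H (χ g) (hker g)
  have hinj : Function.Injective fun g => ((Units.coeHom k).comp (κ g) : G ⧸ H →* k) := by
    intro g g' hgg'
    apply χ.injective
    ext x
    have h1 : ((Units.coeHom k).comp (κ g)) ((x : G) : G ⧸ H) =
        ((Units.coeHom k).comp (κ g')) ((x : G) : G ⧸ H) := by
      simp only at hgg'
      rw [hgg']
    simpa [κ] using h1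
  have hli : LinearIndependent k
      (fun g : G => (((Units.coeHom k).comp (κ g) : G ⧸ H →* k) : G ⧸ H → k)) :=
    (linearIndependent_monoidHom (G ⧸ H) k).comp _ hinj
  haveI : Finite (G ⧸ H) := Quotient.finite _
  haveI : Fintype (G ⧸ H) := Fintype.ofFinite _
  have hcard := hli.fintype_card_le_finrank
  rw [Module.finrank_fintype_fun_eq_card] at hcard
  have h2 : 1 < Nat.card H := H.one_lt_card_iff_ne_bot.mpr (by simpa [hH] using hs)
  have h3 := Subgroup.card_eq_card_quotient_mul_card_subgroup H
  rw [Nat.card_eq_fintype_card, Nat.card_eq_fintype_card] at h3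
  have h4 : 0 < Fintype.card (G ⧸ H) := Fintype.card_pos
  nlinarith [h3, h2, hcard, h4]

end CharAux

open Finset
section Twist
structure TwistData (k G T T' : Type*) [Field k] [CommGroup G] [Fintype G]
    [DecidableEq G] [Ring T] [Algebra k T] [Ring T'] [Algebra k T'] where
  π : G → T →ₗ[k] T
  f : T ≃ₗ[k] T'
  μ : G → G → kˣ
  hcoc : ∀ g h l : G, μ g h * μ (g * h) l = μ g (h * l) * μ h l
  hμ1 : ∀ g : G, μ 1 g = 1
  hμ2 : ∀ g : G, μ g 1 = 1
  hsum : ∀ x : T, ∑ g : G, π g x = x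
  hpp : ∀ g h : G, ∀ x : T, π g (π h x) = if g = h then π h x else 0
  hpl : ∀ g h : G, ∀ x y : T, π h (π g x * y) = π g x * π (g⁻¹ * h) y
  hpr : ∀ g h : G, ∀ x y : T, π h (y * π g x) = π (h * g⁻¹) y * π g x
  hone : f 1 = 1
  hmul : ∀ g h : G, ∀ x y : T, f (π g x) * f (π h y) = ((μ g h : k)) • f (π g x * π h y)

namespace TwistData

variable {k G T T' : Type*} [Field k] [CommGroup G] [Fintype G]
    [DecidableEq G] [Ring T] [Algebra k T] [Ring T'] [Algebra k T']
    (D : TwistData k G T T')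

def theta (t' : T') : Matrix G G T :=
  Matrix.of fun p q => ((D.μ (p * q⁻¹) q : k)) • D.π (p * q⁻¹) (D.f.symm t')

lemma theta_apply (t' : T') (p q : G) :
    D.theta t' p q = ((D.μ (p * q⁻¹) q : k)) • D.π (p * q⁻¹) (D.f.symm t') := rfl

lemma fsymm_mul (x y : T') : D.f.symm (x * y) =
    ∑ g : G, ∑ m : G, ((D.μ g m : k)) • (D.π g (D.f.symm x) * D.π m (D.f.symm y)) := by
  apply D.f.injective
  rw [LinearEquiv.apply_symm_apply]
  calc x * y = D.f (D.f.symm x) * D.f (D.f.symm y) := by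
        rw [LinearEquiv.apply_symm_apply, LinearEquiv.apply_symm_apply]
  _ = D.f (∑ g : G, D.π g (D.f.symm x)) * D.f (∑ m : G, D.π m (D.f.symm y)) := by
        rw [D.hsum, D.hsum]
  _ = (∑ g : G, D.f (D.π g (D.f.symm x))) * (∑ m : G, D.f (D.π m (D.f.symm y))) := by
        rw [map_sum, map_sum]
  _ = ∑ g : G, ∑ m : G, D.f (D.π g (D.f.symm x)) * D.f (D.π m (D.f.symm y)) := by
        rw [Finset.sum_mul_sum]
  _ = ∑ g : G, ∑ m : G, ((D.μ g m : k)) • D.f (D.π g (D.f.symm x) * D.π m (D.f.symm y)) :=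
        Finset.sum_congr rfl fun g _ => Finset.sum_congr rfl fun m _ => D.hmul g m _ _
  _ = D.f (∑ g : G, ∑ m : G, ((D.μ g m : k)) • (D.π g (D.f.symm x) * D.π m (D.f.symm y))) := by
        rw [map_sum]
        exact Finset.sum_congr rfl fun g _ => by
          rw [map_sum]
          exact Finset.sum_congr rfl fun m _ => (map_smul D.f.toLinearMap _ _).symm

lemma theta_mul (x y : T') : D.theta (x * y) = D.theta x * D.theta y := by
  ext p q
  rw [Matrix.mul_apply]
  rw [theta_apply, fsymm_mul]
  -- canonicalise the left-hand side
  have lhs_eq : ((D.μ (p * q⁻¹) q : k)) •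
      D.π (p * q⁻¹) (∑ g : G, ∑ m : G,
        ((D.μ g m : k)) • (D.π g (D.f.symm x) * D.π m (D.f.symm y))) =
      ∑ g : G, (((D.μ (p * q⁻¹) q : k)) * ((D.μ g (g⁻¹ * (p * q⁻¹)) : k))) •
        (D.π g (D.f.symm x) * D.π (g⁻¹ * (p * q⁻¹)) (D.f.symm y)) := by
    rw [map_sum, Finset.smul_sum]
    refine Finset.sum_congr rfl fun g _ => ?_
    rw [map_sum, Finset.smul_sum]
    have inner : ∀ m : G, ((D.μ (p * q⁻¹) q : k)) •
        D.π (p * q⁻¹) (((D.μ g m : k)) • (D.π g (D.f.symm x) * D.π m (D.f.symm y))) =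
        if g⁻¹ * (p * q⁻¹) = m then
          (((D.μ (p * q⁻¹) q : k)) * ((D.μ g m : k))) •
            (D.π g (D.f.symm x) * D.π m (D.f.symm y))
        else 0 := by
      intro m
      rw [map_smul, D.hpl g (p * q⁻¹) _ _, D.hpp]
      split <;> simp [smul_smul]
    rw [Finset.sum_congr rfl fun m _ => inner m]
    rw [Finset.sum_ite_eq]
    simp
  rw [lhs_eq]
  -- canonicalise the right-hand side and reindex
  refine Fintype.sum_equiv ((Equiv.inv G).trans (Equiv.mulRight p)) _ _ fun g => ?_
  simp only [Equiv.trans_apply, Equiv.inv_apply, Equiv.coe_mulRight]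
  rw [theta_apply, theta_apply]
  have e1 : p * (g⁻¹ * p)⁻¹ = g := by group
  have e2 : g⁻¹ * p * q⁻¹ = g⁻¹ * (p * q⁻¹) := by group
  rw [e1, e2]
  rw [smul_mul_assoc, mul_smul_comm, smul_smul]
  congr 1
  -- the cocycle coefficient identity
  have key := D.hcoc g (g⁻¹ * (p * q⁻¹)) q
  have e3 : g * (g⁻¹ * (p * q⁻¹)) = p * q⁻¹ := by group
  have e4 : g⁻¹ * (p * q⁻¹) * q = g⁻¹ * p := by group
  rw [e3, e4] at key
  have key' := congrArg (Units.val (α := k)) key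
  push_cast at key'
  linear_combination key'

def phi (X : Matrix G G T) : T' :=
  D.f (((Fintype.card G : k))⁻¹ • ∑ h : G, ∑ q : G,
    ((D.μ h q : k))⁻¹ • D.π h (X (h * q) q))

lemma phi_add (X Y : Matrix G G T) : D.phi (X + Y) = D.phi X + D.phi Y := by
  simp only [phi, Matrix.add_apply, map_add, smul_add, Finset.sum_add_distrib]

lemma phi_zero : D.phi 0 = 0 := by simp [phi]

lemma phi_theta (hN : (Fintype.card G : k) ≠ 0) (t' : T') : D.phi (D.theta t') = t' := by
  have inner : ∀ h q : G, ((D.μ h q : k))⁻¹ • D.π h (D.theta t' (h * q) q) =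
      D.π h (D.f.symm t') := by
    intro h q
    rw [theta_apply]
    have e1 : h * q * q⁻¹ = h := by group
    rw [e1, map_smul, D.hpp, if_pos rfl, smul_smul,
      inv_mul_cancel₀ (Units.ne_zero (D.μ h q) : (D.μ h q : k) ≠ 0), one_smul]
  have step : ∑ h : G, ∑ q : G, ((D.μ h q : k))⁻¹ • D.π h (D.theta t' (h * q) q) =
      (Fintype.card G : k) • D.f.symm t' := by
    calc ∑ h : G, ∑ q : G, ((D.μ h q : k))⁻¹ • D.π h (D.theta t' (h * q) q)
        = ∑ h : G, ∑ _q : G, D.π h (D.f.symm t') :=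
          Finset.sum_congr rfl fun h _ => Finset.sum_congr rfl fun q _ => inner h q
    _ = ∑ h : G, (Fintype.card G : k) • D.π h (D.f.symm t') := by
          simp [Finset.sum_const, Nat.cast_smul_eq_nsmul]
    _ = (Fintype.card G : k) • ∑ h : G, D.π h (D.f.symm t') := by rw [Finset.smul_sum]
    _ = (Fintype.card G : k) • D.f.symm t' := by rw [D.hsum]
  rw [phi, step, smul_smul, inv_mul_cancel₀ hN, one_smul, LinearEquiv.apply_symm_apply]

lemma sum_swap3 {M : Type*} [AddCommMonoid M] (F : G → G → G → M) :
    ∑ h : G, ∑ q : G, ∑ m : G, F h q m = ∑ m : G, ∑ h : G, ∑ q : G, F h q m := by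
  calc ∑ h : G, ∑ q : G, ∑ m : G, F h q m
      = ∑ h : G, ∑ m : G, ∑ q : G, F h q m :=
        Finset.sum_congr rfl fun h _ => Finset.sum_comm
  _ = ∑ m : G, ∑ h : G, ∑ q : G, F h q m := Finset.sum_comm

lemma phi_mul_theta (X : Matrix G G T) (j : T') :
    D.phi (X * D.theta j) = D.phi X * j := by
  set d := D.f.symm j with hd
  -- canonical form of the left-hand side summand
  have lhs_inner : ∀ h q : G, ((D.μ h q : k))⁻¹ • D.π h ((X * D.theta j) (h * q) q) =
      ∑ m : G, (((D.μ h q : k))⁻¹ * ((D.μ m q : k))) •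
        (D.π (h * m⁻¹) (X (h * q) (m * q)) * D.π m d) := by
    intro h q
    rw [Matrix.mul_apply]
    have e0 : ∀ r : G, X (h * q) r * D.theta j r q =
        ((D.μ (r * q⁻¹) q : k)) • (X (h * q) r * D.π (r * q⁻¹) d) := by
      intro r
      rw [theta_apply, mul_smul_comm, hd]
    rw [Finset.sum_congr rfl fun r _ => e0 r]
    rw [map_sum, Finset.smul_sum]
    refine Fintype.sum_equiv (Equiv.mulRight q⁻¹) _ _ fun r => ?_
    simp only [Equiv.coe_mulRight]
    have e1 : r * q⁻¹ * q = r := by group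
    rw [e1, map_smul, D.hpr (r * q⁻¹) h d (X (h * q) r), smul_smul]
  -- canonical form of the right-hand side
  have hj : j = ∑ m : G, D.f (D.π m d) := by
    rw [← map_sum, D.hsum, hd, LinearEquiv.apply_symm_apply]
  have rhs_core : D.f (∑ l : G, ∑ p : G, ((D.μ l p : k))⁻¹ • D.π l (X (l * p) p)) * j =
      D.f (∑ l : G, ∑ p : G, ∑ m : G, ((((D.μ l p : k))⁻¹ * ((D.μ l m : k))) •
        (D.π l (X (l * p) p) * D.π m d))) := by
    calc D.f (∑ l : G, ∑ p : G, ((D.μ l p : k))⁻¹ • D.π l (X (l * p) p)) * j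
        = (∑ l : G, ∑ p : G, ((D.μ l p : k))⁻¹ • D.f (D.π l (X (l * p) p))) *
            (∑ m : G, D.f (D.π m d)) := by
          rw [← hj]
          congr 1
          rw [map_sum]
          exact Finset.sum_congr rfl fun l _ => by
            rw [map_sum]
            exact Finset.sum_congr rfl fun p _ => map_smul _ _ _
    _ = ∑ l : G, ∑ p : G, ∑ m : G,
          (((D.μ l p : k))⁻¹ • D.f (D.π l (X (l * p) p))) * D.f (D.π m d) := by
          rw [Finset.sum_mul]
          refine Finset.sum_congr rfl fun l _ => ?_
          rw [Finset.sum_mul]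
          refine Finset.sum_congr rfl fun p _ => ?_
          rw [smul_mul_assoc, Finset.mul_sum, Finset.smul_sum]
          exact Finset.sum_congr rfl fun m _ => (smul_mul_assoc _ _ _).symm
    _ = ∑ l : G, ∑ p : G, ∑ m : G, ((((D.μ l p : k))⁻¹ * ((D.μ l m : k))) •
          D.f (D.π l (X (l * p) p) * D.π m d)) := by
          refine Finset.sum_congr rfl fun l _ => Finset.sum_congr rfl fun p _ =>
            Finset.sum_congr rfl fun m _ => ?_
          rw [smul_mul_assoc, D.hmul l m, smul_smul]
    _ = D.f (∑ l : G, ∑ p : G, ∑ m : G, ((((D.μ l p : k))⁻¹ * ((D.μ l m : k))) •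
          (D.π l (X (l * p) p) * D.π m d))) := by
          rw [map_sum]
          refine Finset.sum_congr rfl fun l _ => ?_
          rw [map_sum]
          refine Finset.sum_congr rfl fun p _ => ?_
          rw [map_sum]
          exact Finset.sum_congr rfl fun m _ => (map_smul _ _ _).symm
  have expand : D.phi X * j =
      D.f (((Fintype.card G : k))⁻¹ • ∑ l : G, ∑ p : G, ∑ m : G,
        ((((D.μ l p : k))⁻¹ * ((D.μ l m : k))) •
          (D.π l (X (l * p) p) * D.π m d))) := by
    rw [phi, map_smul, smul_mul_assoc, rhs_core, map_smul]
  rw [expand, phi]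
  congr 1
  rw [Finset.sum_congr rfl fun h _ => Finset.sum_congr rfl fun q _ => lhs_inner h q]
  congr 1
  rw [sum_swap3 (fun h q m => (((D.μ h q : k))⁻¹ * ((D.μ m q : k))) •
        (D.π (h * m⁻¹) (X (h * q) (m * q)) * D.π m d))]
  rw [sum_swap3 (fun l p m => ((((D.μ l p : k))⁻¹ * ((D.μ l m : k))) •
        (D.π l (X (l * p) p) * D.π m d)))]
  refine Finset.sum_congr rfl fun m _ => ?_
  refine (Fintype.sum_equiv (Equiv.mulRight m) _ _ fun l => ?_).symm
  simp only [Equiv.coe_mulRight]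
  refine (Fintype.sum_equiv (Equiv.mulLeft m) _ _ fun q => ?_).symm
  simp only [Equiv.coe_mulLeft]
  have e2 : l * m * m⁻¹ = l := by group
  have e3 : l * (m * q) = l * m * q := by group
  rw [e2, e3]
  congr 1
  have key := D.hcoc l m q
  have key' := congrArg (Units.val (α := k)) key
  push_cast at key'
  field_simp
  linear_combination -key'

include D in
theorem noetherian (hN : (Fintype.card G : k) ≠ 0) (hT : IsNoetherianRing T) :
    IsNoetherianRing T' := by
  haveI := hT
  haveI hmod : IsNoetherian T (Matrix G G T) := (inferInstance : IsNoetherian T (G → G → T))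
  haveI hMx : IsNoetherian (Matrix G G T) (Matrix G G T) := isNoetherian_of_tower T hmod
  -- the colon ideal construction
  let P : Submodule T' T' → Submodule (Matrix G G T) (Matrix G G T) := fun J =>
    { carrier := {Y | ∀ X : Matrix G G T, D.phi (X * Y) ∈ J}
      add_mem' := fun {a b} ha hb X => by
        rw [mul_add, D.phi_add]; exact J.add_mem (ha X) (hb X)
      zero_mem' := fun X => by rw [mul_zero, D.phi_zero]; exact J.zero_mem
      smul_mem' := fun Z Y hY X => by
        rw [smul_eq_mul, ← mul_assoc]; exact hY (X * Z) }
  have hPmem : ∀ (J : Submodule T' T') (j : T'), j ∈ J → D.theta j ∈ P J := by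
    intro J j hj X
    rw [D.phi_mul_theta]
    have := J.smul_mem (D.phi X) hj
    rwa [smul_eq_mul] at this
  have key : ∀ (J : Submodule T' T') (t' : T'),
      D.theta t' ∈ Submodule.span (Matrix G G T) (D.theta '' (J : Set T')) → t' ∈ J := by
    intro J t' ht
    have hle : Submodule.span (Matrix G G T) (D.theta '' (J : Set T')) ≤ P J :=
      Submodule.span_le.mpr (by rintro _ ⟨j, hj, rfl⟩; exact hPmem J j hj)
    have h2 : ∀ X : Matrix G G T, D.phi (X * D.theta t') ∈ J := hle ht
    have h3 := h2 1
    rwa [one_mul, D.phi_theta hN] at h3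
  have hIle : ∀ J₁ J₂ : Submodule T' T',
      Submodule.span (Matrix G G T) (D.theta '' (J₁ : Set T')) ≤
        Submodule.span (Matrix G G T) (D.theta '' (J₂ : Set T')) ↔ J₁ ≤ J₂ := by
    intro J₁ J₂
    constructor
    · intro h j hj
      exact key J₂ j (h (Submodule.subset_span ⟨j, hj, rfl⟩))
    · intro h
      exact Submodule.span_mono (Set.image_mono h)
  let E : Submodule T' T' ↪o Submodule (Matrix G G T) (Matrix G G T) :=
    OrderEmbedding.ofMapLEIff
      (fun J => Submodule.span (Matrix G G T) (D.theta '' (J : Set T'))) hIle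
  exact isNoetherianRing_iff.mpr (isNoetherian_mk ⟨E.dual.wellFounded hMx.wf⟩)

open MulOpposite in
/-- The opposite twist data. -/
def op (D : TwistData k G T T') : TwistData k G Tᵐᵒᵖ T'ᵐᵒᵖ where
  π g := (opLinearEquiv k).toLinearMap ∘ₗ (D.π g) ∘ₗ (opLinearEquiv k).symm.toLinearMap
  f := ((opLinearEquiv k : T ≃ₗ[k] Tᵐᵒᵖ).symm.trans D.f).trans (opLinearEquiv k : T' ≃ₗ[k] T'ᵐᵒᵖ)
  μ g h := D.μ h g
  hcoc g h l := by
    rw [mul_comm g h, mul_comm h l]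
    apply Units.ext
    push_cast
    have key := congrArg (Units.val (α := k)) (D.hcoc l h g)
    push_cast at key
    linear_combination -key
  hμ1 g := D.hμ2 g
  hμ2 g := D.hμ1 g
  hsum x := by
    simp only [LinearMap.comp_apply, LinearEquiv.coe_coe, coe_opLinearEquiv,
      coe_opLinearEquiv_symm]
    rw [← op_sum, D.hsum, op_unop]
  hpp g h x := by
    simp only [LinearMap.comp_apply, LinearEquiv.coe_coe, coe_opLinearEquiv,
      coe_opLinearEquiv_symm, unop_op]
    rw [D.hpp]
    split <;> simp
  hpl g h x y := by
    simp only [LinearMap.comp_apply, LinearEquiv.coe_coe, coe_opLinearEquiv,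
      coe_opLinearEquiv_symm, unop_mul, unop_op]
    rw [D.hpr g h (unop x) (unop y), op_mul, mul_comm g⁻¹ h]
  hpr g h x y := by
    simp only [LinearMap.comp_apply, LinearEquiv.coe_coe, coe_opLinearEquiv,
      coe_opLinearEquiv_symm, unop_mul, unop_op]
    rw [D.hpl g h (unop x) (unop y), op_mul, mul_comm g⁻¹ h]
  hone := by
    simp only [LinearEquiv.trans_apply, LinearEquiv.coe_coe, coe_opLinearEquiv,
      coe_opLinearEquiv_symm, unop_one]
    rw [D.hone, op_one]
  hmul g h x y := by
    simp only [LinearMap.comp_apply, LinearEquiv.trans_apply, LinearEquiv.coe_coe,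
      coe_opLinearEquiv, coe_opLinearEquiv_symm, unop_op, unop_mul]
    rw [← op_mul, D.hmul h g (unop y) (unop x), op_smul]

/-- The inverse twist data. -/
def symm (D : TwistData k G T T') : TwistData k G T' T where
  π g := D.f.toLinearMap ∘ₗ (D.π g) ∘ₗ D.f.symm.toLinearMap
  f := D.f.symm
  μ g h := (D.μ g h)⁻¹
  hcoc g h l := by
    show (D.μ g h)⁻¹ * (D.μ (g * h) l)⁻¹ = (D.μ g (h * l))⁻¹ * (D.μ h l)⁻¹
    rw [← mul_inv, ← mul_inv, D.hcoc]
  hμ1 g := by show (D.μ 1 g)⁻¹ = 1; rw [D.hμ1, inv_one]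
  hμ2 g := by show (D.μ g 1)⁻¹ = 1; rw [D.hμ2, inv_one]
  hsum x := by
    simp only [LinearMap.comp_apply, LinearEquiv.coe_coe]
    rw [← map_sum, D.hsum, LinearEquiv.apply_symm_apply]
  hpp g h x := by
    simp only [LinearMap.comp_apply, LinearEquiv.coe_coe, LinearEquiv.symm_apply_apply]
    rw [D.hpp]
    split <;> simp
  hpl g h x y := by
    simp only [LinearMap.comp_apply, LinearEquiv.coe_coe]
    have step1 : D.f.symm (D.f (D.π g (D.f.symm x)) * y) =
        ∑ m : G, ((D.μ g m : k)) • (D.π g (D.f.symm x) * D.π m (D.f.symm y)) := by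
      rw [D.fsymm_mul]
      have inner : ∀ g' m : G,
          ((D.μ g' m : k)) • (D.π g' (D.f.symm (D.f (D.π g (D.f.symm x)))) *
            D.π m (D.f.symm y)) =
          if g' = g then ((D.μ g' m : k)) • (D.π g (D.f.symm x) * D.π m (D.f.symm y))
          else 0 := by
        intro g' m
        rw [LinearEquiv.symm_apply_apply, D.hpp]
        split <;> simp_all
      rw [Finset.sum_congr rfl fun g' _ => Finset.sum_congr rfl fun m _ => inner g' m]
      rw [Finset.sum_comm]
      simp [Finset.sum_ite_eq']
    rw [step1, map_sum]
    have inner2 : ∀ m : G, D.π h (((D.μ g m : k)) •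
        (D.π g (D.f.symm x) * D.π m (D.f.symm y))) =
        if g⁻¹ * h = m then ((D.μ g m : k)) •
          (D.π g (D.f.symm x) * D.π m (D.f.symm y)) else 0 := by
      intro m
      rw [map_smul, D.hpl, D.hpp]
      split <;> simp
    rw [Finset.sum_congr rfl fun m _ => inner2 m, Finset.sum_ite_eq,
      if_pos (Finset.mem_univ _), map_smul,
      ← D.hmul g (g⁻¹ * h) (D.f.symm x) (D.f.symm y)]
  hpr g h x y := by
    simp only [LinearMap.comp_apply, LinearEquiv.coe_coe]
    have step1 : D.f.symm (y * D.f (D.π g (D.f.symm x))) =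
        ∑ m : G, ((D.μ m g : k)) • (D.π m (D.f.symm y) * D.π g (D.f.symm x)) := by
      rw [D.fsymm_mul]
      have inner : ∀ m g' : G,
          ((D.μ m g' : k)) • (D.π m (D.f.symm y) *
            D.π g' (D.f.symm (D.f (D.π g (D.f.symm x))))) =
          if g' = g then ((D.μ m g' : k)) • (D.π m (D.f.symm y) * D.π g (D.f.symm x))
          else 0 := by
        intro m g'
        rw [LinearEquiv.symm_apply_apply, D.hpp]
        split <;> simp_all
      rw [Finset.sum_congr rfl fun m _ => Finset.sum_congr rfl fun g' _ => inner m g']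
      simp [Finset.sum_ite_eq']
    rw [step1, map_sum]
    have inner2 : ∀ m : G, D.π h (((D.μ m g : k)) •
        (D.π m (D.f.symm y) * D.π g (D.f.symm x))) =
        if m = h * g⁻¹ then ((D.μ m g : k)) •
          (D.π m (D.f.symm y) * D.π g (D.f.symm x)) else 0 := by
      intro m
      rw [map_smul, D.hpl m h (D.f.symm y) (D.π g (D.f.symm x)), D.hpp]
      by_cases hm : m = h * g⁻¹
      · have : m⁻¹ * h = g := by rw [hm]; group
        rw [if_pos this, if_pos hm]
      · have : ¬ (m⁻¹ * h = g) := by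
          intro hc
          apply hm
          rw [← hc]
          group
        rw [if_neg this, if_neg hm]
        simp
    rw [Finset.sum_congr rfl fun m _ => inner2 m, Finset.sum_ite_eq',
      if_pos (Finset.mem_univ _), map_smul,
      ← D.hmul (h * g⁻¹) g (D.f.symm y) (D.f.symm x)]
  hone := by rw [← D.hone, LinearEquiv.symm_apply_apply]
  hmul g h x y := by
    simp only [LinearMap.comp_apply, LinearEquiv.coe_coe, LinearEquiv.symm_apply_apply]
    rw [D.hmul g h (D.f.symm x) (D.f.symm y), map_smul, LinearEquiv.symm_apply_apply,
      smul_smul, Units.val_inv_eq_inv_val, inv_mul_cancel₀ (Units.ne_zero _), one_smul]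

theorem noetherianBoth (D : TwistData k G T T') (hN : (Fintype.card G : k) ≠ 0)
    (h : IsNoetherianRing T ∧ IsNoetherianRing Tᵐᵒᵖ) :
    IsNoetherianRing T' ∧ IsNoetherianRing T'ᵐᵒᵖ :=
  ⟨D.noetherian hN h.1, D.op.noetherian hN h.2⟩

end TwistData
end Twist

section ActionProj

open Finset

lemma unit_mul_cast {k : Type*} [Field k] {u v w : kˣ} (h : u * v = w) :
    (u : k) * (v : k) = (w : k) := by rw [← h]; push_cast; ring

variable {k A G : Type*} [Field k] [Ring A] [Algebra k A] [CommGroup G] [Fintype G] [DecidableEq G]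
  (ρ : G →* (A ≃ₐ[k] A)) (χ : G ≃* (G →* kˣ))

/-- The projection onto the isotypic component of `χ g⁻¹`. -/
noncomputable def aproj (g : G) : A →ₗ[k] A :=
  (Fintype.card G : k)⁻¹ • ∑ s : G, ((χ g s : k)) • (ρ s).toLinearMap

lemma aproj_apply (g : G) (x : A) :
    aproj ρ χ g x = (Fintype.card G : k)⁻¹ • ∑ s : G, ((χ g s : k)) • ρ s x := by
  simp [aproj, LinearMap.sum_apply, LinearMap.smul_apply]

lemma sum_chi (t : G) :
    ∑ s : G, ((χ t s : k)) = if t = 1 then (Fintype.card G : k) else 0 := by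
  by_cases ht : t = 1
  · subst ht
    simp [map_one χ]
  · rw [if_neg ht]
    apply char_sum_eq_zero
    intro hc
    exact ht (χ.injective (by rw [hc, map_one]))

lemma sum_chi' (s : G) :
    ∑ g : G, ((χ g s : k)) = if s = 1 then (Fintype.card G : k) else 0 := by
  by_cases hs : s = 1
  · subst hs
    simp
  · rw [if_neg hs]
    obtain ⟨g₀, hg₀⟩ := exists_char_val_ne_one χ hs
    let c : G →* kˣ :=
      { toFun := fun g => χ g s
        map_one' := by simp
        map_mul' := fun a b => by show χ (a * b) s = χ a s * χ b s; rw [map_mul χ]; rfl }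
    have hc : c ≠ 1 := fun hc => hg₀ (by
      have := congrArg (fun φ : G →* kˣ => φ g₀) hc
      simpa [c] using this)
    exact char_sum_eq_zero hc

lemma aproj_equiv (g : G) (x : A) (s : G) :
    ρ s (aproj ρ χ g x) = ((χ g⁻¹ s : k)) • aproj ρ χ g x := by
  rw [aproj_apply]
  rw [map_smul, map_sum, smul_smul, mul_comm, ← smul_smul, Finset.smul_sum, Finset.smul_sum]
  rw [Finset.smul_sum]
  apply Fintype.sum_equiv (Equiv.mulLeft s)
  intro t
  simp only [Equiv.coe_mulLeft]
  rw [map_smul]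
  have h1 : ρ s (ρ t x) = ρ (s * t) x := by rw [map_mul ρ]; rfl
  rw [h1, smul_smul, smul_smul, smul_smul]
  congr 1
  rw [mul_assoc]
  congr 1
  exact (unit_mul_cast (by rw [map_mul (χ g), map_inv χ, MonoidHom.inv_apply,
    inv_mul_cancel_left])).symm

lemma aproj_of_equiv (hchar : (Fintype.card G : k) ≠ 0) (g h : G) (a : A)
    (ha : ∀ s, ρ s a = ((χ h⁻¹ s : k)) • a) :
    aproj ρ χ g a = if g = h then a else 0 := by
  rw [aproj_apply]
  have step : ∀ s : G, ((χ g s : k)) • ρ s a = ((χ (g * h⁻¹) s : k)) • a := by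
    intro s
    rw [ha s, smul_smul]
    congr 1
    exact unit_mul_cast (by rw [map_mul χ]; rfl)
  rw [Finset.sum_congr rfl fun s _ => step s, ← Finset.sum_smul, sum_chi]
  by_cases hgh : g = h
  · subst hgh
    rw [if_pos (mul_inv_cancel g), if_pos rfl, smul_smul,
      inv_mul_cancel₀ hchar, one_smul]
  · have hne : ¬ (g * h⁻¹ = 1) := fun hc => hgh (by
      have := mul_inv_eq_one.mp hc
      exact this)
    rw [if_neg hne, if_neg hgh, zero_smul, smul_zero]

lemma aproj_sum (hchar : (Fintype.card G : k) ≠ 0) (x : A) :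
    ∑ g : G, aproj ρ χ g x = x := by
  rw [Finset.sum_congr rfl fun g _ => aproj_apply ρ χ g x, ← Finset.smul_sum]
  rw [Finset.sum_comm]
  have step : ∀ s : G, ∑ g : G, ((χ g s : k)) • ρ s x =
      (if s = 1 then (Fintype.card G : k) else 0) • ρ s x := by
    intro s
    rw [← Finset.sum_smul, sum_chi']
  rw [Finset.sum_congr rfl fun s _ => step s]
  have step2 : ∀ s : G, (if s = 1 then (Fintype.card G : k) else 0) • ρ s x =
      if s = 1 then (Fintype.card G : k) • ρ s x else 0 := by
    intro s
    split <;> simp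
  rw [Finset.sum_congr rfl fun s _ => step2 s, Finset.sum_ite_eq', if_pos (Finset.mem_univ _)]
  rw [smul_smul, inv_mul_cancel₀ hchar, one_smul, map_one ρ]
  rfl

lemma aproj_pp (hchar : (Fintype.card G : k) ≠ 0) (g h : G) (x : A) :
    aproj ρ χ g (aproj ρ χ h x) = if g = h then aproj ρ χ h x else 0 :=
  aproj_of_equiv ρ χ hchar g h _ (aproj_equiv ρ χ h x)

lemma aproj_l (g h : G) (x y : A) :
    aproj ρ χ h (aproj ρ χ g x * y) = aproj ρ χ g x * aproj ρ χ (g⁻¹ * h) y := by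
  rw [aproj_apply ρ χ h, aproj_apply ρ χ (g⁻¹ * h)]
  have hterm : ∀ s : G, ((χ h s : k)) • ρ s (aproj ρ χ g x * y) =
      ((χ (g⁻¹ * h) s : k)) • (aproj ρ χ g x * ρ s y) := by
    intro s
    rw [map_mul (ρ s), aproj_equiv, smul_mul_assoc, smul_smul]
    congr 1
    refine unit_mul_cast ?_
    rw [mul_comm g⁻¹ h, map_mul χ]
    rfl
  rw [Finset.sum_congr rfl fun s _ => hterm s]
  rw [mul_smul_comm, Finset.mul_sum, Finset.smul_sum, Finset.smul_sum]
  exact Finset.sum_congr rfl fun s _ => by rw [mul_smul_comm]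

lemma aproj_r (g h : G) (x y : A) :
    aproj ρ χ h (y * aproj ρ χ g x) = aproj ρ χ (h * g⁻¹) y * aproj ρ χ g x := by
  rw [aproj_apply ρ χ h, aproj_apply ρ χ (h * g⁻¹)]
  have hterm : ∀ s : G, ((χ h s : k)) • ρ s (y * aproj ρ χ g x) =
      ((χ (h * g⁻¹) s : k)) • (ρ s y * aproj ρ χ g x) := by
    intro s
    rw [map_mul (ρ s), aproj_equiv, mul_smul_comm, smul_smul]
    congr 1
    refine unit_mul_cast ?_
    rw [map_mul χ]
    rfl
  rw [Finset.sum_congr rfl fun s _ => hterm s]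
  rw [smul_mul_assoc, Finset.sum_mul, Finset.smul_sum, Finset.smul_sum]
  exact Finset.sum_congr rfl fun s _ => by rw [smul_mul_assoc]

lemma aproj_mem_actionGrading (g : G) (x : A) :
    aproj ρ χ g x ∈ actionGrading ρ χ g :=
  fun s => aproj_equiv ρ χ g x s

end ActionProj

section Final

open Finset

variable {k A B G : Type u} [Field k] [Ring A] [Algebra k A]
    [Ring B] [Algebra k B] [CommGroup G] [Fintype G] [DecidableEq G]

/-- The twist data induced on `A ⊗[k] R` and `B ⊗[k] R`. -/
noncomputable def tensorTwistData
    (hchar : (Fintype.card G : k) ≠ 0)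
    (ρ : G →* (A ≃ₐ[k] A)) (χ : G ≃* (G →* kˣ))
    (μ : G → G → kˣ) (hμ : IsCocycle μ)
    (f : A ≃ₗ[k] B) (hf : IsCocycleTwist k (actionGrading ρ χ) μ f)
    (R : Type u) [CommRing R] [Algebra k R] :
    TwistData k G (A ⊗[k] R) (B ⊗[k] R) where
  π g := LinearMap.rTensor R (aproj ρ χ g)
  f := TensorProduct.congr f (LinearEquiv.refl k R)
  μ := μ
  hcoc := hμ.1
  hμ1 := hμ.2.1
  hμ2 := hμ.2.2
  hsum x := by
    induction x using TensorProduct.induction_on with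
    | zero => simp
    | tmul a r =>
      simp only [LinearMap.rTensor_tmul]
      rw [← TensorProduct.sum_tmul, aproj_sum ρ χ hchar]
    | add u v hu hv =>
      simp only [map_add, Finset.sum_add_distrib, hu, hv]
  hpp g h x := by
    induction x using TensorProduct.induction_on with
    | zero => simp
    | tmul a r =>
      simp only [LinearMap.rTensor_tmul]
      rw [aproj_pp ρ χ hchar]
      split <;> simp [TensorProduct.zero_tmul]
    | add u v hu hv =>
      simp only [map_add, hu, hv]
      split <;> simp
  hpl g h x y := by
    induction x using TensorProduct.induction_on with
    | zero => simp
    | tmul a r =>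
      induction y using TensorProduct.induction_on with
      | zero => simp
      | tmul b s =>
        simp only [LinearMap.rTensor_tmul, Algebra.TensorProduct.tmul_mul_tmul]
        rw [aproj_l ρ χ g h a b]
      | add u v hu hv =>
        simp only [mul_add, map_add, hu, hv]
    | add u v hu hv =>
      simp only [add_mul, map_add, hu, hv]
  hpr g h x y := by
    induction x using TensorProduct.induction_on with
    | zero => simp
    | tmul a r =>
      induction y using TensorProduct.induction_on with
      | zero => simp
      | tmul b s =>
        simp only [LinearMap.rTensor_tmul, Algebra.TensorProduct.tmul_mul_tmul]
        rw [aproj_r ρ χ g h a b]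
      | add u v hu hv =>
        simp only [add_mul, map_add, hu, hv]
    | add u v hu hv =>
      simp only [mul_add, map_add, hu, hv]
  hone := by
    rw [Algebra.TensorProduct.one_def, TensorProduct.congr_tmul, hf.map_one]
    rfl
  hmul g h x y := by
    induction x using TensorProduct.induction_on with
    | zero => simp
    | tmul a r =>
      induction y using TensorProduct.induction_on with
      | zero => simp
      | tmul b s =>
        simp only [LinearMap.rTensor_tmul, TensorProduct.congr_tmul,
          Algebra.TensorProduct.tmul_mul_tmul, LinearEquiv.refl_apply]
        rw [hf.map_mul g h (aproj ρ χ g a) (aproj ρ χ h b)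
          (aproj_mem_actionGrading ρ χ g a) (aproj_mem_actionGrading ρ χ h b)]
        rw [TensorProduct.smul_tmul']
      | add u v hu hv =>
        simp only [mul_add, map_add, smul_add, hu, hv]
    | add u v hu hv =>
      simp only [add_mul, map_add, smul_add, hu, hv]

end Final


/-- Under the standing hypotheses (`k` algebraically closed, `G` finite
abelian with `char k ∤ |G|` acting on the noetherian `k`-algebra `A` by algebra
automorphisms, `χ : G ≅ G^∨` fixed, `μ` a normalised 2-cocycle), `A` is strongly
noetherian if and only if the cocycle twist `A^{G,μ}` (here `B`, via `f`) is. -/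
theorem statement12 {k A B G : Type u} [Field k] [IsAlgClosed k] [Ring A] [Algebra k A]
    [Ring B] [Algebra k B] [CommGroup G] [Fintype G] [DecidableEq G]
    (hchar : (Fintype.card G : k) ≠ 0)
    (ρ : G →* (A ≃ₐ[k] A)) (χ : G ≃* (G →* kˣ))
    (μ : G → G → kˣ) (hμ : IsCocycle μ)
    (hA : IsNoetherianRingBoth A)
    (f : A ≃ₗ[k] B) (hf : IsCocycleTwist k (actionGrading ρ χ) μ f) :
    IsStronglyNoetherian k A ↔ IsStronglyNoetherian k B := by
  constructor
  · intro hSN R _ _ hR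
    obtain ⟨h1, h2⟩ := hSN R hR
    let D := tensorTwistData hchar ρ χ μ hμ f hf R
    exact ⟨D.noetherian hchar h1, D.op.noetherian hchar h2⟩
  · intro hSN R _ _ hR
    obtain ⟨h1, h2⟩ := hSN R hR
    let D := (tensorTwistData hchar ρ χ μ hμ f hf R).symm
    exact ⟨D.noetherian hchar h1, D.op.noetherian hchar h2⟩
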